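/- Let x, y ∈ ℝⁿ, μ ∈ ℝ. The characteristic polynomial of the Hessian of f(x,y) = (μ - xᵀy)²/2 equals (λ² - (μ - xᵀy)²)^{n-1} · (λ² - λ(‖x‖² + ‖y‖²) - (μ - xᵀy)² + 2(μ - xᵀy)xᵀy). -/

import Mathlib

open Matrix Polynomial BigOperators

private lemma aux_det {n : ℕ} (hn : 1 ≤ n) {K : Type*} [Field K]
    (t c : K) (u v : Fin n → K) (ht : t ≠ 0) (hd : t ^ 2 - c ^ 2 ≠ 0) :
    (Matrix.fromBlocks
        (t • (1 : Matrix (Fin n) (Fin n) K) - vecMulVec v v)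
        (-(c • (1 : Matrix (Fin n) (Fin n) K)) - vecMulVec v u)
        (-(c • (1 : Matrix (Fin n) (Fin n) K)) - vecMulVec u v)
        (t • (1 : Matrix (Fin n) (Fin n) K) - vecMulVec u u)).det
      = (t ^ 2 - c ^ 2) ^ (n - 1) *
          (t ^ 2 - c ^ 2 - t * ((∑ i, u i ^ 2) + ∑ i, v i ^ 2)
            - 2 * c * ∑ i, u i * v i) := by
  classical
  obtain ⟨m, rfl⟩ : ∃ m, n = m + 1 := ⟨n - 1, (Nat.sub_add_cancel hn).symm⟩
  set d : K := t ^ 2 - c ^ 2 with hdef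
  set w : Fin (m+1) ⊕ Fin (m+1) → K := Sum.elim v u with hw
  set D : Matrix (Fin (m+1) ⊕ Fin (m+1)) (Fin (m+1) ⊕ Fin (m+1)) K :=
    fromBlocks (t • 1) (-(c • 1)) (-(c • 1)) (t • 1) with hD
  have hsplit : (Matrix.fromBlocks
        (t • (1 : Matrix (Fin (m+1)) (Fin (m+1)) K) - vecMulVec v v)
        (-(c • (1 : Matrix (Fin (m+1)) (Fin (m+1)) K)) - vecMulVec v u)
        (-(c • (1 : Matrix (Fin (m+1)) (Fin (m+1)) K)) - vecMulVec u v)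
        (t • (1 : Matrix (Fin (m+1)) (Fin (m+1)) K) - vecMulVec u u))
      = D + replicateCol Unit (-w) * replicateRow Unit w := by
    ext (i | i) (j | j) <;>
      simp [hD, hw, fromBlocks, vecMulVec, Matrix.mul_apply, Matrix.one_apply,
        sub_eq_add_neg]
  have hDfact :
      (fromBlocks 1 0 ((-(c / t)) • 1) 1 : Matrix (Fin (m+1) ⊕ Fin (m+1)) _ K) *
        fromBlocks (t • 1) (-(c • 1)) 0 ((t - c ^ 2 / t) • 1) = D := by
    ext (i | i) (j | j) <;>
      simp [hD, fromBlocks, Matrix.mul_apply, Matrix.one_apply, mul_ite, ite_mul,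
        Finset.sum_ite_eq, Finset.sum_ite_eq'] <;>
      split_ifs <;> field_simp <;> ring
  have hDdet : D.det = d ^ (m + 1) := by
    rw [← hDfact, det_mul, det_fromBlocks_zero₁₂, det_fromBlocks_zero₂₁]
    simp only [det_one, one_mul, Matrix.det_smul, mul_one, Fintype.card_fin, ← mul_pow]
    congr 1
    field_simp [hdef]
    ring
  have hDu : IsUnit D.det := by
    rw [hDdet]
    exact isUnit_iff_ne_zero.mpr (pow_ne_zero _ hd)
  have hDinv : D⁻¹ = d⁻¹ • fromBlocks (t • 1) (c • 1) (c • 1) (t • 1) := by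
    apply inv_eq_right_inv
    ext (i | i) (j | j) <;>
      simp [hD, fromBlocks, Matrix.mul_apply, Matrix.one_apply, mul_ite, ite_mul,
        Finset.sum_ite_eq, Finset.sum_ite_eq', smul_eq_mul] <;>
      split_ifs <;> field_simp [hdef] <;> ring
  have hvm : w ᵥ* D⁻¹ = d⁻¹ • Sum.elim (t • v + c • u) (c • v + t • u) := by
    rw [hDinv]
    ext (i | i) <;>
      simp [Matrix.vecMul, dotProduct, fromBlocks, Matrix.one_apply, hw, mul_ite, ite_mul,
        Finset.sum_ite_eq, Finset.sum_ite_eq', Fintype.sum_sum_type, smul_eq_mul] <;>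
      ring
  have hE : (replicateRow Unit w * D⁻¹ * replicateCol Unit (-w)) default default
      = -(d⁻¹ * (t * ((∑ i, u i ^ 2) + ∑ i, v i ^ 2) + 2 * c * ∑ i, u i * v i)) := by
    rw [← replicateRow_vecMul, replicateRow_mul_replicateCol_apply, hvm, smul_dotProduct, dotProduct_neg, hw,
      sumElim_dotProduct_sumElim, add_dotProduct, add_dotProduct,
      smul_dotProduct, smul_dotProduct, smul_dotProduct, smul_dotProduct]
    have h1 : v ⬝ᵥ v = ∑ i, v i ^ 2 := by simp [dotProduct, sq]
    have h2 : u ⬝ᵥ u = ∑ i, u i ^ 2 := by simp [dotProduct, sq]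
    have h3 : u ⬝ᵥ v = ∑ i, u i * v i := rfl
    have h4 : v ⬝ᵥ u = ∑ i, u i * v i := by
      simp [dotProduct, mul_comm]
    rw [h1, h2, h3, h4]
    simp [smul_eq_mul]
    ring
  rw [hsplit, det_add_replicateCol_mul_replicateRow hDu, hDdet, det_unique, Matrix.add_apply,
    Matrix.one_apply_eq, hE]
  have : d ^ (m + 1) = d ^ m * d := by ring
  rw [this]
  simp only [Nat.add_sub_cancel]
  field_simp
  ring

set_option maxHeartbeats 1000000 in
/-- The characteristic polynomial of the Hessian of `f(x,y) = (μ - xᵀy)²/2` equals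
`(λ² - (μ - xᵀy)²)^(n-1) · (λ² - λ(‖x‖² + ‖y‖²) - (μ - xᵀy)² + 2(μ - xᵀy)xᵀy)`. -/
theorem hessian_charpoly_general {n : ℕ} (hn : 1 ≤ n) (μ : ℝ) (x y : Fin n → ℝ) :
    (Matrix.fromBlocks
      (Matrix.vecMulVec y y)
      (((∑ i, x i * y i) - μ) • (1 : Matrix (Fin n) (Fin n) ℝ) + Matrix.vecMulVec y x)
      (((∑ i, x i * y i) - μ) • (1 : Matrix (Fin n) (Fin n) ℝ) + Matrix.vecMulVec x y)
      (Matrix.vecMulVec x x)).charpoly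
    = (X ^ 2 - C ((μ - ∑ i, x i * y i) ^ 2)) ^ (n - 1) *
        (X ^ 2 - C ((∑ i, x i ^ 2) + ∑ i, y i ^ 2) * X
          - C ((μ - ∑ i, x i * y i) ^ 2)
          + C (2 * (μ - ∑ i, x i * y i) * ∑ i, x i * y i)) := by
  classical
  set K := FractionRing (Polynomial ℝ)
  set φ : Polynomial ℝ →+* K := algebraMap (Polynomial ℝ) K with hφdef
  have hφ : Function.Injective φ := IsFractionRing.injective _ _
  apply hφ
  set t : K := φ X with htdef
  set r : ℝ →+* K := φ.comp Polynomial.C with hrdef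
  have ht : t ≠ 0 := fun h => X_ne_zero (hφ (by simpa using h))
  have hd : t ^ 2 - (r ((∑ i, x i * y i) - μ)) ^ 2 ≠ 0 := by
    have : t ^ 2 - (r ((∑ i, x i * y i) - μ)) ^ 2
        = φ (X ^ 2 - (Polynomial.C ((∑ i, x i * y i) - μ)) ^ 2) := by
      simp [htdef, hrdef]
    rw [this]
    intro h
    have h2 : (X ^ 2 - (Polynomial.C ((∑ i, x i * y i) - μ)) ^ 2 : Polynomial ℝ) = 0 :=
      hφ (by simpa using h)
    have h3 := congrArg (fun p => Polynomial.coeff p 2) h2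
    simp only [← Polynomial.C_pow, Polynomial.coeff_sub, Polynomial.coeff_X_pow,
      Polynomial.coeff_C, Polynomial.coeff_zero] at h3
    norm_num at h3
  rw [Matrix.charpoly, RingHom.map_det, RingHom.mapMatrix_apply]
  have hmat : (charmatrix (Matrix.fromBlocks
      (Matrix.vecMulVec y y)
      (((∑ i, x i * y i) - μ) • (1 : Matrix (Fin n) (Fin n) ℝ) + Matrix.vecMulVec y x)
      (((∑ i, x i * y i) - μ) • (1 : Matrix (Fin n) (Fin n) ℝ) + Matrix.vecMulVec x y)
      (Matrix.vecMulVec x x))).map φ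
      = Matrix.fromBlocks
        (t • (1 : Matrix (Fin n) (Fin n) K) - vecMulVec (fun i => r (y i)) (fun i => r (y i)))
        (-((r ((∑ i, x i * y i) - μ)) • (1 : Matrix (Fin n) (Fin n) K))
          - vecMulVec (fun i => r (y i)) (fun i => r (x i)))
        (-((r ((∑ i, x i * y i) - μ)) • (1 : Matrix (Fin n) (Fin n) K))
          - vecMulVec (fun i => r (x i)) (fun i => r (y i)))
        (t • (1 : Matrix (Fin n) (Fin n) K) - vecMulVec (fun i => r (x i)) (fun i => r (x i))) := by
    ext (i | i) (j | j) <;>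
      simp [charmatrix_apply, Matrix.map_apply, fromBlocks, vecMulVec,
        Matrix.one_apply, Matrix.diagonal_apply, htdef, hrdef, _root_.map_add, _root_.map_mul,
        apply_ite φ, sub_eq_add_neg] <;>
      split_ifs <;>
      simp [_root_.map_mul] <;> ring
  have hrC : ∀ a : ℝ, φ (Polynomial.C a) = r a := fun a => rfl
  rw [hmat, aux_det hn t (r ((∑ i, x i * y i) - μ)) (fun i => r (x i)) (fun i => r (y i)) ht hd]
  simp only [_root_.map_mul, _root_.map_pow, map_sub, _root_.map_add, map_sum, map_ofNat, hrC,
    ← htdef]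
  ring
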